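/- Let 0 < γ < 1 and let H(x) = x·log₂ x + (1−x)·log₂(1−x) for 0 < x < 1 be the (negative) Shannon entropy function. For x ∈ [0,1) let (δ_i(x))_{i≥1} be the binary digit sequence of x (choosing the expansion that is not eventually all 1s), so that x = Σ_{i=1}^{∞} δ_i(x) 2^{−i}. Let E_γ be the set of all x ∈ [0,1) such that the asymptotic density of digit changes equals γ, i.e. lim_{N→∞} (1/N)·#{ 1 ≤ i ≤ N−1 : δ_{i+1}(x) ≠ δ_i(x) } = γ. Then the Hausdorff dimension of E_γ satisfies dim_H(E_γ) ≤ −H(γ) = −( γ·log₂ γ + (1−γ)·log₂(1−γ) ). -/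

import Mathlib

open Real Filter MeasureTheory
open scoped Classical ENNReal NNReal

set_option maxHeartbeats 1000000

/-- The `i`-th binary digit of `x ∈ [0,1)` (the expansion that is not
eventually all `1`s): `binDigit x i = ⌊x·2^i⌋ mod 2`. -/
noncomputable def binDigit (x : ℝ) (i : ℕ) : ℕ := ⌊x * 2 ^ i⌋.toNat % 2

/-- The number of digit changes among the first `N` binary digits:
`#{1 ≤ i ≤ N-1 : δ_{i+1}(x) ≠ δ_i(x)}`. -/
noncomputable def changeCount (x : ℝ) (N : ℕ) : ℕ :=
  ((Finset.Icc 1 (N - 1)).filter (fun i => binDigit x (i + 1) ≠ binDigit x i)).card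

/-- digit `i` (for `1 ≤ i ≤ N`) of the natural number `k`, read as an `N`-bit string. -/
def digitOf (N k i : ℕ) : ℕ := k / 2 ^ (N - i) % 2

noncomputable def changeSet (N k : ℕ) : Finset ℕ :=
  (Finset.Icc 1 (N - 1)).filter (fun i => digitOf N k (i + 1) ≠ digitOf N k i)

lemma digitOf_lt_two (N k i : ℕ) : digitOf N k i < 2 := Nat.mod_lt _ (by norm_num)

lemma binDigit_eq_digitOf {x : ℝ} (hx : 0 ≤ x) {i N : ℕ} (h : i ≤ N) :
    binDigit x i = digitOf N (⌊x * 2 ^ N⌋.toNat) i := by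
  have h2N : (2:ℝ) ^ N = 2 ^ i * 2 ^ (N - i) := by
    rw [← pow_add]; congr 1; omega
  have key : x * 2 ^ i = x * 2 ^ N / ((2 ^ (N - i) : ℕ) : ℝ) := by
    push_cast
    rw [h2N]
    field_simp
  unfold binDigit digitOf
  rw [Int.floor_toNat, Int.floor_toNat, key, Nat.floor_div_natCast]

lemma changeCount_eq {x : ℝ} (hx : 0 ≤ x) (N : ℕ) :
    changeCount x N = (changeSet N (⌊x * 2 ^ N⌋.toNat)).card := by
  unfold changeCount changeSet
  congr 1
  apply Finset.filter_congr
  intro i hi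
  simp only [Finset.mem_Icc] at hi
  rw [binDigit_eq_digitOf (N := N) hx (by omega), binDigit_eq_digitOf (N := N) hx (by omega)]

lemma eq_of_digits_eq {N k k' : ℕ} (hk : k < 2 ^ N) (hk' : k' < 2 ^ N)
    (h : ∀ i, 1 ≤ i → i ≤ N → digitOf N k i = digitOf N k' i) : k = k' := by
  apply Nat.eq_of_testBit_eq
  intro j
  rcases lt_or_ge j N with hj | hj
  · have := h (N - j) (by omega) (by omega)
    unfold digitOf at this
    rw [show N - (N - j) = j by omega] at this
    simp [Nat.testBit_eq_decide_div_mod_eq, this]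
  · rw [Nat.testBit_eq_false_of_lt (lt_of_lt_of_le hk (Nat.pow_le_pow_right (by norm_num) hj)),
      Nat.testBit_eq_false_of_lt (lt_of_lt_of_le hk' (Nat.pow_le_pow_right (by norm_num) hj))]

lemma count_changes_le (N c : ℕ) :
    ((Finset.range (2 ^ N)).filter (fun k => (changeSet N k).card = c)).card
      ≤ 2 * (N - 1).choose c := by
  have hle := Finset.card_le_card_of_injOn
    (f := fun k => (digitOf N k 1, changeSet N k))
    (s := (Finset.range (2 ^ N)).filter (fun k => (changeSet N k).card = c))
    (t := Finset.range 2 ×ˢ (Finset.Icc 1 (N - 1)).powersetCard c)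
    (fun k hk => by
      simp only [Finset.mem_coe, Finset.mem_filter, Finset.mem_range] at hk
      simp only [Finset.mem_coe, Finset.mem_product, Finset.mem_range, Finset.mem_powersetCard]
      exact ⟨digitOf_lt_two N k 1, Finset.filter_subset _ _, hk.2⟩)
    (by
      intro a ha b hb hab
      simp only [Finset.coe_filter, Set.mem_setOf_eq, Finset.mem_range] at ha hb
      simp only [Prod.mk.injEq] at hab
      refine eq_of_digits_eq ha.1 hb.1 ?_
      intro i
      induction i with
      | zero => omega
      | succ n ih =>
        intro _ hn
        rcases Nat.eq_zero_or_pos n with rfl | hn1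
        · exact hab.1
        · have hmem : (n ∈ changeSet N a) = (n ∈ changeSet N b) := by rw [hab.2]
          simp only [changeSet, Finset.mem_filter, Finset.mem_Icc,
            eq_iff_iff] at hmem
          have h1 := digitOf_lt_two N a (n + 1)
          have h2 := digitOf_lt_two N b (n + 1)
          have h3 := digitOf_lt_two N a n
          have h4 := digitOf_lt_two N b n
          have hd := ih hn1 (by omega)
          have hIcc : 1 ≤ n ∧ n ≤ N - 1 := by omega
          have hiff : digitOf N a (n + 1) ≠ digitOf N a n ↔
              digitOf N b (n + 1) ≠ digitOf N b n := by
            constructor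
            · intro hne; exact (hmem.mp ⟨hIcc, hne⟩).2
            · intro hne; exact (hmem.mpr ⟨hIcc, hne⟩).2
          omega)
  calc _ ≤ _ := hle
    _ = 2 * (N - 1).choose c := by
        rw [Finset.card_product, Finset.card_range, Finset.card_powersetCard, Nat.card_Icc, Nat.add_sub_cancel]

lemma choose_mul_le_one {p : ℝ} (hp0 : 0 < p) (hp1 : p < 1) (n c : ℕ) (hc : c ≤ n) :
    (n.choose c : ℝ) * p ^ c * (1 - p) ^ (n - c) ≤ 1 := by
  have hq : (0:ℝ) < 1 - p := by linarith
  have hexp : ((p + (1 - p)) : ℝ) ^ n = ∑ m ∈ Finset.range (n + 1),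
      p ^ m * (1 - p) ^ (n - m) * (n.choose m : ℝ) := add_pow p (1 - p) n
  have h1 : (1:ℝ) = ∑ m ∈ Finset.range (n + 1),
      p ^ m * (1 - p) ^ (n - m) * (n.choose m : ℝ) := by
    rw [← hexp]; norm_num
  have hterm : p ^ c * (1 - p) ^ (n - c) * (n.choose c : ℝ)
      ≤ ∑ m ∈ Finset.range (n + 1), p ^ m * (1 - p) ^ (n - m) * (n.choose m : ℝ) := by
    apply Finset.single_le_sum (f := fun m => p ^ m * (1 - p) ^ (n - m) * (n.choose m : ℝ))
    · intro m _
      positivity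
    · simp [Nat.lt_succ_iff, hc]
  nlinarith [hterm]

/-- The key binomial estimate: if `(γ-ε)N ≤ c ≤ (γ+ε)N` and `c ≤ N-1` then
`C(N-1,c) ≤ 2 ^ (N*(h + ε*K))` where `h = γL1+(1-γ)L2`, `K = L1+L2`,
`L1 = -log₂ γ`, `L2 = -log₂(1-γ)`. -/
lemma choose_le_rpow {γ ε : ℝ} (h0 : 0 < γ) (h1 : γ < 1) (hε : 0 < ε)
    {N c : ℕ} (hN : 1 ≤ N) (hc : c ≤ N - 1)
    (hcl : (γ - ε) * N ≤ c) (hcu : (c : ℝ) ≤ (γ + ε) * N) :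
    ((N - 1).choose c : ℝ) ≤
      (2:ℝ) ^ ((N : ℝ) * ((γ * (-logb 2 γ) + (1 - γ) * (-logb 2 (1 - γ)))
        + ε * ((-logb 2 γ) + (-logb 2 (1 - γ))))) := by
  set L1 : ℝ := -logb 2 γ with hL1
  set L2 : ℝ := -logb 2 (1 - γ) with hL2
  have hg1 : (0:ℝ) < 1 - γ := by linarith
  have hL1pos : 0 < L1 := by
    rw [hL1, neg_pos]; exact logb_neg (by norm_num) h0 h1
  have hL2pos : 0 < L2 := by
    rw [hL2, neg_pos]; exact logb_neg (by norm_num) hg1 (by linarith)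
  -- γ ^ c = 2 ^ (-(c:ℝ) * L1)
  have hγpow : (γ : ℝ) ^ c = (2:ℝ) ^ (-(c : ℝ) * L1) := by
    rw [hL1]
    rw [show -(c:ℝ) * -logb 2 γ = (c:ℝ) * logb 2 γ by ring]
    rw [mul_comm, Real.rpow_mul (by norm_num), Real.rpow_logb (by norm_num) (by norm_num) h0,
      Real.rpow_natCast]
  have hqpow : (1 - γ : ℝ) ^ (N - 1 - c) = (2:ℝ) ^ (-((N - 1 - c : ℕ) : ℝ) * L2) := by
    rw [hL2]
    rw [show -((N - 1 - c : ℕ):ℝ) * -logb 2 (1 - γ) = ((N - 1 - c : ℕ):ℝ) * logb 2 (1 - γ) by ring]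
    rw [mul_comm, Real.rpow_mul (by norm_num), Real.rpow_logb (by norm_num) (by norm_num) hg1,
      Real.rpow_natCast]
  have hkey := choose_mul_le_one h0 h1 (N - 1) c hc
  have hpos1 : (0:ℝ) < γ ^ c := pow_pos h0 c
  have hpos2 : (0:ℝ) < (1 - γ) ^ (N - 1 - c) := pow_pos hg1 _
  have hB : ((N - 1).choose c : ℝ) ≤ (γ ^ c)⁻¹ * ((1 - γ) ^ (N - 1 - c))⁻¹ := by
    rw [← one_div, ← one_div, div_mul_div_comm]
    rw [le_div_iff₀ (by positivity)]
    calc ((N-1).choose c : ℝ) * (γ ^ c * (1 - γ) ^ (N - 1 - c))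
        = ((N-1).choose c : ℝ) * γ ^ c * (1 - γ) ^ (N - 1 - c) := by ring
      _ ≤ 1 := hkey
      _ = 1 * 1 := by norm_num
  have hBr : (γ ^ c)⁻¹ * ((1 - γ) ^ (N - 1 - c))⁻¹
      = (2:ℝ) ^ ((c : ℝ) * L1 + ((N - 1 - c : ℕ) : ℝ) * L2) := by
    rw [hγpow, hqpow, ← Real.rpow_neg (by norm_num), ← Real.rpow_neg (by norm_num),
      ← Real.rpow_add (by norm_num)]
    ring_nf
  rw [hBr] at hB
  refine hB.trans (Real.rpow_le_rpow_of_exponent_le (by norm_num) ?_)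
  have hsub : ((N - 1 - c : ℕ) : ℝ) ≤ (N : ℝ) - c := by
    have : (N - 1 - c : ℕ) ≤ N - c := by omega
    calc ((N - 1 - c : ℕ) : ℝ) ≤ ((N - c : ℕ) : ℝ) := by exact_mod_cast this
      _ ≤ (N : ℝ) - c := by
          rw [Nat.cast_sub (by omega)]
  have h1' : (c : ℝ) * L1 ≤ (γ + ε) * N * L1 :=
    mul_le_mul_of_nonneg_right hcu hL1pos.le
  have h2' : ((N - 1 - c : ℕ) : ℝ) * L2 ≤ (1 - γ + ε) * N * L2 := by
    apply mul_le_mul_of_nonneg_right _ hL2pos.le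
    calc ((N - 1 - c : ℕ) : ℝ) ≤ (N : ℝ) - c := hsub
      _ ≤ (N : ℝ) - (γ - ε) * N := by linarith
      _ = (1 - γ + ε) * N := by ring
  calc (c : ℝ) * L1 + ((N - 1 - c : ℕ) : ℝ) * L2
      ≤ (γ + ε) * N * L1 + (1 - γ + ε) * N * L2 := add_le_add h1' h2'
    _ = (N : ℝ) * ((γ * L1 + (1 - γ) * L2) + ε * (L1 + L2)) := by ring

lemma card_window_le {γ ε : ℝ} (h0 : 0 < γ) (h1 : γ < 1) (hε : 0 < ε)
    {N : ℕ} (hN : 1 ≤ N) :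
    (((Finset.range (2 ^ N)).filter
        (fun k => |((changeSet N k).card : ℝ) / N - γ| ≤ ε)).card : ℝ)
      ≤ (N : ℝ) * (2 * (2:ℝ) ^ ((N : ℝ) * ((γ * (-logb 2 γ) + (1 - γ) * (-logb 2 (1 - γ)))
        + ε * ((-logb 2 γ) + (-logb 2 (1 - γ)))))) := by
  set B : ℝ := (2:ℝ) ^ ((N : ℝ) * ((γ * (-logb 2 γ) + (1 - γ) * (-logb 2 (1 - γ)))
        + ε * ((-logb 2 γ) + (-logb 2 (1 - γ))))) with hB
  have hNpos : (0:ℝ) < N := by exact_mod_cast hN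
  set S := (Finset.range (2 ^ N)).filter
      (fun k => |((changeSet N k).card : ℝ) / N - γ| ≤ ε) with hS
  set T := (Finset.range N).filter (fun c : ℕ => |(c : ℝ) / N - γ| ≤ ε) with hT
  have hcard : S.card = ∑ c ∈ T, (S.filter (fun k => (changeSet N k).card = c)).card := by
    apply Finset.card_eq_sum_card_fiberwise
    intro k hk
    simp only [hS, Finset.mem_coe, Finset.mem_filter, Finset.mem_range] at hk
    simp only [hT, Finset.mem_coe, Finset.mem_filter, Finset.mem_range]
    have hcle : (changeSet N k).card ≤ N - 1 := by
      calc (changeSet N k).card ≤ (Finset.Icc 1 (N-1)).card := Finset.card_filter_le _ _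
        _ = N - 1 := by rw [Nat.card_Icc]; omega
    exact ⟨by omega, hk.2⟩
  have hfiber : ∀ c ∈ T, ((S.filter (fun k => (changeSet N k).card = c)).card : ℝ) ≤ 2 * B := by
    intro c hc
    simp only [hT, Finset.mem_filter, Finset.mem_range] at hc
    have hcN : c ≤ N - 1 := by omega
    have hwin := abs_le.mp hc.2
    have hcl : (γ - ε) * N ≤ (c : ℝ) := by
      have := hwin.1
      have h' : γ - ε ≤ (c : ℝ) / N := by linarith
      calc (γ - ε) * N ≤ ((c:ℝ) / N) * N := by
            exact mul_le_mul_of_nonneg_right h' hNpos.le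
        _ = (c : ℝ) := by field_simp
    have hcu : (c : ℝ) ≤ (γ + ε) * N := by
      have h' : (c : ℝ) / N ≤ γ + ε := by linarith [hwin.2]
      calc (c : ℝ) = ((c:ℝ) / N) * N := by field_simp
        _ ≤ (γ + ε) * N := mul_le_mul_of_nonneg_right h' hNpos.le
    have hsub : (S.filter (fun k => (changeSet N k).card = c)).card
        ≤ ((Finset.range (2 ^ N)).filter (fun k => (changeSet N k).card = c)).card := by
      apply Finset.card_le_card
      intro k hk
      simp only [hS, Finset.mem_filter, Finset.mem_range] at hk ⊢
      exact ⟨hk.1.1, hk.2⟩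
    calc ((S.filter (fun k => (changeSet N k).card = c)).card : ℝ)
        ≤ ((2 * (N - 1).choose c : ℕ) : ℝ) := by
          exact_mod_cast le_trans hsub (count_changes_le N c)
      _ = 2 * (((N - 1).choose c : ℕ) : ℝ) := by push_cast; ring
      _ ≤ 2 * B := by
          have := choose_le_rpow h0 h1 hε hN hcN hcl hcu
          rw [hB]; linarith
  calc (S.card : ℝ) = ∑ c ∈ T, ((S.filter (fun k => (changeSet N k).card = c)).card : ℝ) := by
        rw [hcard]; push_cast; ring
    _ ≤ ∑ _c ∈ T, 2 * B := Finset.sum_le_sum hfiber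
    _ = T.card * (2 * B) := by rw [Finset.sum_const, nsmul_eq_mul]
    _ ≤ (N : ℝ) * (2 * B) := by
        apply mul_le_mul_of_nonneg_right
        · have : T.card ≤ N := by
            calc T.card ≤ (Finset.range N).card := Finset.card_filter_le _ _
              _ = N := Finset.card_range N
          exact_mod_cast this
        · positivity

lemma card_filter_fin (m : ℕ) (q : ℕ → Prop) :
    (Finset.univ.filter (fun i : Fin m => q i.val)).card
      = ((Finset.range m).filter q).card := by
  rw [Finset.card_filter, Finset.card_filter,
    ← Fin.sum_univ_eq_sum_range (fun k => if q k then 1 else 0) m]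

lemma dimH_EM_le {γ ε : ℝ} (h0 : 0 < γ) (h1 : γ < 1) (hε : 0 < ε) (M : ℕ) :
    dimH {x : ℝ | x ∈ Set.Ico (0:ℝ) 1 ∧
        ∀ N, M ≤ N → |((changeCount x N : ℝ)) / N - γ| ≤ ε}
      ≤ ENNReal.ofReal ((γ * (-logb 2 γ) + (1 - γ) * (-logb 2 (1 - γ)))
          + ε * ((-logb 2 γ) + (-logb 2 (1 - γ))) + ε) := by
  set L1 : ℝ := -logb 2 γ with hL1
  set L2 : ℝ := -logb 2 (1 - γ) with hL2
  have hg1 : (0:ℝ) < 1 - γ := by linarith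
  have hL1pos : 0 < L1 := by rw [hL1, neg_pos]; exact logb_neg (by norm_num) h0 h1
  have hL2pos : 0 < L2 := by rw [hL2, neg_pos]; exact logb_neg (by norm_num) hg1 (by linarith)
  set E : ℝ := γ * L1 + (1 - γ) * L2 + ε * (L1 + L2) with hE
  set d : ℝ := E + ε with hd
  have hEpos : 0 < E := by
    have : 0 < γ * L1 := mul_pos h0 hL1pos
    have : 0 < (1 - γ) * L2 := mul_pos hg1 hL2pos
    have : 0 < ε * (L1 + L2) := mul_pos hε (by linarith)
    positivity
  have hdpos : 0 < d := by positivity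
  set S : Set ℝ := {x : ℝ | x ∈ Set.Ico (0:ℝ) 1 ∧
      ∀ N, M ≤ N → |((changeCount x N : ℝ)) / N - γ| ≤ ε} with hSdef
  -- the covering sets
  set t : ℕ → ∀ _ : ℕ, Set ℝ := fun N k =>
    if |((changeSet N k).card : ℝ) / N - γ| ≤ ε
      then Set.Icc ((k : ℝ) / 2 ^ N) (((k : ℝ) + 1) / 2 ^ N) else ∅ with ht_def
  have key : μH[d] S ≤ liminf
      (fun N : ℕ => ∑ i : Fin (2 ^ N), EMetric.diam (t N i.val) ^ d) atTop := by
    apply MeasureTheory.Measure.hausdorffMeasure_le_liminf_sum d S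
      (fun N : ℕ => ENNReal.ofReal ((1/2 : ℝ) ^ N))
    · have : Tendsto (fun N : ℕ => ((1/2 : ℝ)) ^ N) atTop (nhds 0) :=
        tendsto_pow_atTop_nhds_zero_of_lt_one (by norm_num) (by norm_num)
      simpa using ENNReal.tendsto_ofReal this
    · refine Eventually.of_forall fun N => fun i => ?_
      simp only [ht_def]
      split_ifs
      · rw [Real.ediam_Icc]
        apply ENNReal.ofReal_le_ofReal
        rw [div_sub_div_same]
        rw [show ((i.val : ℝ) + 1 - i.val) = 1 by ring]
        rw [one_div, one_div, inv_pow]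
      · simp
    · filter_upwards [eventually_ge_atTop M] with N hN
      intro x hx
      have hx01 : (0:ℝ) ≤ x ∧ x < 1 := ⟨hx.1.1, hx.1.2⟩
      have hx2N : (0:ℝ) ≤ x * 2 ^ N := by
        have : (0:ℝ) < 2 ^ N := by positivity
        nlinarith [hx.1.1]
      set k : ℕ := ⌊x * 2 ^ N⌋.toNat with hk_def
      have hkfl : k = ⌊x * 2 ^ N⌋₊ := Int.floor_toNat _
      have hk2 : k < 2 ^ N := by
        rw [hkfl]
        rw [Nat.floor_lt hx2N]
        push_cast
        nlinarith [pow_pos (show (0:ℝ) < 2 by norm_num) N]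
      rw [Set.mem_iUnion]
      refine ⟨⟨k, hk2⟩, ?_⟩
      have hcond : |((changeSet N k).card : ℝ) / N - γ| ≤ ε := by
        rw [← changeCount_eq hx01.1 N]
        exact hx.2 N hN
      rw [ht_def]
      simp only [if_pos hcond]
      have h2Npos : (0:ℝ) < 2 ^ N := by positivity
      constructor
      · rw [div_le_iff₀ h2Npos]
        calc (k:ℝ) = (⌊x * 2 ^ N⌋₊ : ℝ) := by rw [hkfl]
          _ ≤ x * 2 ^ N := Nat.floor_le hx2N
          _ = x * 2 ^ N := rfl
      · rw [le_div_iff₀ h2Npos]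
        have : x * 2 ^ N < (k:ℝ) + 1 := by
          rw [hkfl]; exact Nat.lt_floor_add_one _
        linarith
  have hsum : ∀ᶠ N : ℕ in atTop, (∑ i : Fin (2 ^ N), EMetric.diam (t N i.val) ^ d)
      ≤ ENNReal.ofReal (2 * ((N:ℝ) * ((2:ℝ) ^ (-ε : ℝ)) ^ N)) := by
    filter_upwards [eventually_ge_atTop 1] with N hN
    have hterm : ∀ i : Fin (2 ^ N), EMetric.diam (t N i.val) ^ d
        = if |((changeSet N i.val).card : ℝ) / N - γ| ≤ ε
            then ENNReal.ofReal ((1/2 : ℝ) ^ N) ^ d else 0 := by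
      intro i
      simp only [ht_def]
      split_ifs
      · show Metric.ediam _ ^ d = _
        rw [Real.ediam_Icc]
        congr 2
        rw [div_sub_div_same]
        rw [show ((i.val : ℝ) + 1 - i.val) = 1 by ring]
        rw [one_div, one_div, inv_pow]
      · show Metric.ediam _ ^ d = _
        simp only [EMetric.diam_empty]
        exact ENNReal.zero_rpow_of_pos hdpos
    rw [Finset.sum_congr rfl (fun i _ => hterm i)]
    rw [Finset.sum_ite, Finset.sum_const_zero, add_zero, Finset.sum_const, nsmul_eq_mul]
    have hcards := card_filter_fin (2 ^ N)
      (fun k => |((changeSet N k).card : ℝ) / N - γ| ≤ ε)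
    rw [hcards]
    set c : ℕ := ((Finset.range (2 ^ N)).filter
      (fun k => |((changeSet N k).card : ℝ) / N - γ| ≤ ε)).card with hc
    have hpowpos : (0:ℝ) < (1/2 : ℝ) ^ N := by positivity
    rw [ENNReal.ofReal_rpow_of_pos hpowpos]
    rw [show ((c:ℕ) : ℝ≥0∞) = ENNReal.ofReal (c : ℝ) by rw [ENNReal.ofReal_natCast]]
    rw [← ENNReal.ofReal_mul (by positivity)]
    apply ENNReal.ofReal_le_ofReal
    have hcardle : (c : ℝ) ≤ (N : ℝ) * (2 * (2:ℝ) ^ ((N : ℝ) * E)) :=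
      card_window_le h0 h1 hε hN
    have hrpow1 : ((1/2 : ℝ) ^ N : ℝ) ^ d = (2:ℝ) ^ (-(N:ℝ) * d) := by
      rw [show ((1/2 : ℝ) ^ N : ℝ) = (2:ℝ) ^ (-(N:ℝ)) by
        rw [Real.rpow_neg (by norm_num), Real.rpow_natCast, one_div, inv_pow]]
      rw [← Real.rpow_mul (by norm_num : (0:ℝ) ≤ 2)]
    have hrpow2 : (2:ℝ) ^ ((N:ℝ) * E) * (2:ℝ) ^ (-(N:ℝ) * d) = ((2:ℝ) ^ (-ε : ℝ)) ^ N := by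
      rw [← Real.rpow_add (by norm_num)]
      rw [← Real.rpow_natCast ((2:ℝ) ^ (-ε : ℝ)) N, ← Real.rpow_mul (by norm_num)]
      congr 1
      rw [hd]
      ring
    calc (c : ℝ) * ((1/2 : ℝ) ^ N : ℝ) ^ d
        ≤ ((N : ℝ) * (2 * (2:ℝ) ^ ((N : ℝ) * E))) * ((1/2 : ℝ) ^ N : ℝ) ^ d := by
          apply mul_le_mul_of_nonneg_right hcardle
          positivity
      _ = 2 * ((N:ℝ) * ((2:ℝ) ^ ((N:ℝ) * E) * (2:ℝ) ^ (-(N:ℝ) * d))) := by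
          rw [hrpow1]; ring
      _ = 2 * ((N:ℝ) * ((2:ℝ) ^ (-ε : ℝ)) ^ N) := by rw [hrpow2]
  have hlim : Tendsto (fun N : ℕ => ENNReal.ofReal (2 * ((N:ℝ) * ((2:ℝ) ^ (-ε:ℝ)) ^ N)))
      atTop (nhds 0) := by
    have hr : |(2:ℝ) ^ (-ε:ℝ)| < 1 := by
      rw [abs_of_pos (Real.rpow_pos_of_pos (by norm_num) _)]
      exact Real.rpow_lt_one_of_one_lt_of_neg one_lt_two (by linarith)
    have h2 := (tendsto_self_mul_const_pow_of_abs_lt_one hr).const_mul (2:ℝ)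
    have h3 := ENNReal.tendsto_ofReal h2
    simpa using h3
  have hliminf : liminf (fun N : ℕ => ∑ i : Fin (2 ^ N), EMetric.diam (t N i.val) ^ d)
      atTop ≤ 0 := by
    calc liminf (fun N : ℕ => ∑ i : Fin (2 ^ N), EMetric.diam (t N i.val) ^ d) atTop
        ≤ liminf (fun N : ℕ =>
            ENNReal.ofReal (2 * ((N:ℝ) * ((2:ℝ) ^ (-ε : ℝ)) ^ N))) atTop :=
          liminf_le_liminf hsum
      _ = 0 := hlim.liminf_eq
  have hμ : μH[d] S = 0 := le_antisymm (key.trans hliminf) (zero_le)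
  have hne : μH[((d.toNNReal : ℝ≥0) : ℝ)] S ≠ ⊤ := by
    rw [Real.coe_toNNReal d hdpos.le, hμ]
    exact ENNReal.zero_ne_top
  have hdim := dimH_le_of_hausdorffMeasure_ne_top hne
  calc dimH S ≤ ((d.toNNReal : ℝ≥0) : ℝ≥0∞) := hdim
    _ = ENNReal.ofReal d := rfl

/-- For `0 < γ < 1`, the set of `x ∈ [0,1)` whose binary digit sequence
has asymptotic digit-change density `γ` has Hausdorff dimension at most
`-H(γ) = -(γ log₂ γ + (1-γ) log₂(1-γ))`. -/
theorem dimH_digit_change_density_le (γ : ℝ) (h0 : 0 < γ) (h1 : γ < 1) :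
    dimH {x : ℝ | x ∈ Set.Ico (0 : ℝ) 1 ∧
        Filter.Tendsto (fun N : ℕ => (changeCount x N : ℝ) / N)
          Filter.atTop (nhds γ)} ≤
      ENNReal.ofReal (-(γ * Real.logb 2 γ + (1 - γ) * Real.logb 2 (1 - γ))) := by
  set L1 : ℝ := -logb 2 γ with hL1
  set L2 : ℝ := -logb 2 (1 - γ) with hL2
  have hg1 : (0:ℝ) < 1 - γ := by linarith
  have hL1pos : 0 < L1 := by rw [hL1, neg_pos]; exact logb_neg (by norm_num) h0 h1
  have hL2pos : 0 < L2 := by rw [hL2, neg_pos]; exact logb_neg (by norm_num) hg1 (by linarith)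
  have hh : -(γ * Real.logb 2 γ + (1 - γ) * Real.logb 2 (1 - γ))
      = γ * L1 + (1 - γ) * L2 := by rw [hL1, hL2]; ring
  rw [hh]
  have hhpos : 0 < γ * L1 + (1 - γ) * L2 := by
    have := mul_pos h0 hL1pos
    have := mul_pos hg1 hL2pos
    linarith
  refine ENNReal.le_of_forall_pos_le_add fun ε' hε' _ => ?_
  set ε : ℝ := (ε' : ℝ) / (L1 + L2 + 1) with hεdef
  have hεpos : 0 < ε := by
    apply div_pos (by exact_mod_cast hε') (by linarith)
  -- decompose the set into countably many pieces
  set EM : ℕ → Set ℝ := fun M => {x : ℝ | x ∈ Set.Ico (0:ℝ) 1 ∧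
      ∀ N, M ≤ N → |((changeCount x N : ℝ)) / N - γ| ≤ ε} with hEM
  have hsub : {x : ℝ | x ∈ Set.Ico (0 : ℝ) 1 ∧
      Filter.Tendsto (fun N : ℕ => (changeCount x N : ℝ) / N) Filter.atTop (nhds γ)}
      ⊆ ⋃ M : ℕ, EM M := by
    intro x hx
    obtain ⟨M, hM⟩ := (Metric.tendsto_atTop.mp hx.2) ε hεpos
    rw [Set.mem_iUnion]
    refine ⟨M, hx.1, fun N hN => ?_⟩
    have := hM N hN
    rw [Real.dist_eq] at this
    exact this.le
  calc dimH {x : ℝ | x ∈ Set.Ico (0 : ℝ) 1 ∧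
        Filter.Tendsto (fun N : ℕ => (changeCount x N : ℝ) / N) Filter.atTop (nhds γ)}
      ≤ dimH (⋃ M : ℕ, EM M) := dimH_mono hsub
    _ = ⨆ M : ℕ, dimH (EM M) := dimH_iUnion EM
    _ ≤ ENNReal.ofReal ((γ * L1 + (1 - γ) * L2) + ε * (L1 + L2) + ε) := by
        apply iSup_le
        intro M
        exact dimH_EM_le h0 h1 hεpos M
    _ = ENNReal.ofReal (γ * L1 + (1 - γ) * L2) + ↑ε' := by
        have hεsum : ε * (L1 + L2) + ε = (ε' : ℝ) := by
          rw [hεdef]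
          field_simp
        rw [show (γ * L1 + (1 - γ) * L2) + ε * (L1 + L2) + ε
            = (γ * L1 + (1 - γ) * L2) + (ε * (L1 + L2) + ε) by ring, hεsum]
        rw [ENNReal.ofReal_add hhpos.le (by exact_mod_cast hε'.le)]
        rw [ENNReal.ofReal_coe_nnreal]
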